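/- Pointwise tilt bound: let Φ be weakly conformal at points x and y with conformal factors e^{λ(x)}, e^{λ(y)} and orthonormal frames e_i = e^{-λ}∂_{x_i}Φ. Then |e^{-2λ(y)} ∂₁Φ(y) ∧ ∂₂Φ(y) − e₁(x) ∧ e₂(x)|² e^{2λ(y)} ≤ 4 |∇Φ(x) − ∇Φ(y)|². -/

import Mathlib

private lemma bessel2 {m : ℕ} (u a b : EuclideanSpace ℝ (Fin m)) (e : ℝ)
    (ha : ‖a‖ = e) (hb : ‖b‖ = e) (hab : (inner ℝ a b : ℝ) = 0) :
    (inner ℝ u a : ℝ) ^ 2 + (inner ℝ u b : ℝ) ^ 2 ≤ ‖u‖ ^ 2 * e ^ 2 := by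
  set p : ℝ := inner ℝ u a with hp
  set r : ℝ := inner ℝ u b with hr
  have hv : (inner ℝ u (p • a + r • b) : ℝ) = p ^ 2 + r ^ 2 := by
    simp only [inner_add_right, real_inner_smul_right, ← hp, ← hr]; ring
  have hvv : (inner ℝ (p • a + r • b) (p • a + r • b) : ℝ) = (p ^ 2 + r ^ 2) * e ^ 2 := by
    simp only [inner_add_left, inner_add_right, real_inner_smul_left, real_inner_smul_right,
      real_inner_self_eq_norm_sq, ha, hb, hab, real_inner_comm a b, mul_zero, zero_mul,
      add_zero, zero_add, norm_smul, mul_pow, Real.norm_eq_abs, sq_abs]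
    ring
  have key := real_inner_mul_inner_self_le u (p • a + r • b)
  rw [hv, hvv, real_inner_self_eq_norm_sq] at key
  rcases eq_or_lt_of_le (by positivity : (0:ℝ) ≤ p ^ 2 + r ^ 2) with h | h
  · nlinarith [sq_nonneg (‖u‖ * e)]
  · nlinarith

private lemma keyineq (a b p q r s : ℝ) (ha : 0 < a) (hb : 0 < b)
    (h1 : p ^ 2 + r ^ 2 ≤ b ^ 2 * a ^ 2) (h2 : s ^ 2 + q ^ 2 ≤ b ^ 2 * a ^ 2) :
    0 ≤ 4 * a ^ 4 + 3 * a ^ 2 * b ^ 2 - 4 * a ^ 2 * p - 4 * a ^ 2 * q + p * q - r * s := by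
  have hab : 0 < a * b := mul_pos ha hb
  have hp : p ≤ a * b := by nlinarith [sq_nonneg (p - a * b), sq_nonneg r]
  have hq : q ≤ a * b := by nlinarith [sq_nonneg (q - a * b), sq_nonneg s]
  -- G ≥ F(t) with t = p + q, F(t) = t²/2 − 4a²t + 4a⁴ + 2a²b²
  have hstep : (p + q) ^ 2 / 2 - 4 * a ^ 2 * (p + q) + 4 * a ^ 4 + 2 * a ^ 2 * b ^ 2
      ≤ 4 * a ^ 4 + 3 * a ^ 2 * b ^ 2 - 4 * a ^ 2 * p - 4 * a ^ 2 * q + p * q - r * s := by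
    nlinarith [sq_nonneg (r - s)]
  rcases le_total (b ^ 2) (2 * a ^ 2) with hc | hc
  · have hba : 0 ≤ 2 * a - b := by nlinarith
    nlinarith [sq_nonneg (p + q - 2 * a * b), sq_nonneg (2 * a * (a - b)),
      mul_nonneg (sub_nonneg.2 (add_le_add hp hq)) (mul_nonneg ha.le hba)]
  · nlinarith [sq_nonneg (p + q - 4 * a ^ 2),
      mul_nonneg (sq_nonneg a) (by linarith : (0:ℝ) ≤ b ^ 2 - 2 * a ^ 2)]

/-- Inner product of simple 2-vectors in `Λ²ℝᵐ`:
`⟨a∧b, c∧d⟩ = ⟨a,c⟩⟨b,d⟩ − ⟨a,d⟩⟨b,c⟩`. -/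
noncomputable def wedgeInner {m : ℕ} (a b c d : EuclideanSpace ℝ (Fin m)) : ℝ :=
  (inner ℝ a c : ℝ) * (inner ℝ b d : ℝ) - (inner ℝ a d : ℝ) * (inner ℝ b c : ℝ)

/-- pointwise tilt bound: for a map weakly conformal at `x` and `y`,
`|e^{−2λ(y)} ∂₁Φ(y)∧∂₂Φ(y) − e₁(x)∧e₂(x)|² e^{2λ(y)} ≤ 4|∇Φ(x) − ∇Φ(y)|²`,
with the squared norm in `Λ²ℝᵐ` expanded by the Gram identity. -/
theorem stmt9 (m : ℕ) (d1x d2x d1y d2y : EuclideanSpace ℝ (Fin m)) (ex ey : ℝ)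
    (hex : 0 < ex) (hey : 0 < ey)
    (hx1 : ‖d1x‖ = ex) (hx2 : ‖d2x‖ = ex) (hx3 : (inner ℝ d1x d2x : ℝ) = 0)
    (hy1 : ‖d1y‖ = ey) (hy2 : ‖d2y‖ = ey) (hy3 : (inner ℝ d1y d2y : ℝ) = 0) :
    ((ey ^ 2)⁻¹ ^ 2 * wedgeInner d1y d2y d1y d2y
        - 2 * (ey ^ 2)⁻¹ * (ex ^ 2)⁻¹ * wedgeInner d1y d2y d1x d2x
        + (ex ^ 2)⁻¹ ^ 2 * wedgeInner d1x d2x d1x d2x) * ey ^ 2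
      ≤ 4 * (‖d1x - d1y‖ ^ 2 + ‖d2x - d2y‖ ^ 2) := by
  set p : ℝ := inner ℝ d1y d1x with hp
  set q : ℝ := inner ℝ d2y d2x with hq
  set r : ℝ := inner ℝ d1y d2x with hrr
  set s : ℝ := inner ℝ d2y d1x with hs
  have hB1 : p ^ 2 + r ^ 2 ≤ ey ^ 2 * ex ^ 2 := by
    simpa [hy1] using bessel2 d1y d1x d2x ex hx1 hx2 hx3
  have hB2 : s ^ 2 + q ^ 2 ≤ ey ^ 2 * ex ^ 2 := by
    simpa [hy2, add_comm] using bessel2 d2y d1x d2x ex hx1 hx2 hx3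
  have hn1 : ‖d1x - d1y‖ ^ 2 = ex ^ 2 - 2 * p + ey ^ 2 := by
    rw [norm_sub_sq_real, hx1, hy1, real_inner_comm d1y d1x, ← hp]
  have hn2 : ‖d2x - d2y‖ ^ 2 = ex ^ 2 - 2 * q + ey ^ 2 := by
    rw [norm_sub_sq_real, hx2, hy2, real_inner_comm d2y d2x, ← hq]
  have hWyy : wedgeInner d1y d2y d1y d2y = ey ^ 2 * ey ^ 2 := by
    simp only [wedgeInner, real_inner_self_eq_norm_sq, hy1, hy2, real_inner_comm d1y d2y,
      hy3, mul_zero, zero_mul, sub_zero]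
  have hWxx : wedgeInner d1x d2x d1x d2x = ex ^ 2 * ex ^ 2 := by
    simp only [wedgeInner, real_inner_self_eq_norm_sq, hx1, hx2, real_inner_comm d1x d2x,
      hx3, mul_zero, zero_mul, sub_zero]
  have hWyx : wedgeInner d1y d2y d1x d2x = p * q - r * s := by
    simp only [wedgeInner]; rfl
  rw [hWyy, hWxx, hWyx, hn1, hn2]
  have hG := keyineq ex ey p q r s hex hey hB1 hB2
  have hex2 : (0:ℝ) < ex ^ 2 := by positivity
  have hey2 : (ey:ℝ) ^ 2 ≠ 0 := by positivity
  have hkey : 4 * ((ex ^ 2 - 2 * p + ey ^ 2) + (ex ^ 2 - 2 * q + ey ^ 2))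
      - (((ey ^ 2)⁻¹ ^ 2 * (ey ^ 2 * ey ^ 2) - 2 * (ey ^ 2)⁻¹ * (ex ^ 2)⁻¹ * (p * q - r * s)
          + (ex ^ 2)⁻¹ ^ 2 * (ex ^ 2 * ex ^ 2)) * ey ^ 2)
      = 2 * (4 * ex ^ 4 + 3 * ex ^ 2 * ey ^ 2 - 4 * ex ^ 2 * p - 4 * ex ^ 2 * q
          + p * q - r * s) / ex ^ 2 := by
    field_simp
    ring
  have hpos : 0 ≤ 2 * (4 * ex ^ 4 + 3 * ex ^ 2 * ey ^ 2 - 4 * ex ^ 2 * p - 4 * ex ^ 2 * q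
      + p * q - r * s) / ex ^ 2 := by
    apply div_nonneg (by linarith) hex2.le
  linarith [hkey ▸ hpos]
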